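/- Let Λ be a set of nonnegative real numbers satisfying DCC. For each i ∈ ℕ suppose given a natural number l_i ≥ 1, a natural number k_i ≥ 1, natural numbers n_{1,i},…,n_{k_i,i} and elements λ_{1,i},…,λ_{k_i,i} ∈ Λ, and set a_i := 1 − 1/l_i + (1/l_i)·Σ_{s=1}^{k_i} n_{s,i} λ_{s,i}. Assume that a_i ≤ 1 for every i, that n_{1,i} ≥ 1 for every i, and that the set {λ_{1,i} | i ∈ ℕ} is infinite. Then the set {a_i | i ∈ ℕ} is infinite. (This is the arithmetic content of Lemma 4.6: if the distinguished coefficients λ_{1,i} of the boundary or nef part take infinitely many values and contribute nontrivially (n_{1,i} > 0) to the adjunction coefficient a_i, then the adjunction coefficients a_i take infinitely many values.) -/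

import Mathlib

/-- A set of real numbers satisfies DCC if it contains no infinite strictly
decreasing sequence. -/
def SatisfiesDCC (S : Set ℝ) : Prop :=
  ¬ ∃ f : ℕ → ℝ, (∀ n, f n ∈ S) ∧ StrictAnti f

theorem infinite_adjunction_coeffs (Λ : Set ℝ) (h0 : ∀ a ∈ Λ, 0 ≤ a)
    (hΛ : SatisfiesDCC Λ) (l k : ℕ → ℕ) (hl : ∀ i, 1 ≤ l i) (hk : ∀ i, 1 ≤ k i)
    (n : (i : ℕ) → Fin (k i) → ℕ) (lam : (i : ℕ) → Fin (k i) → ℝ)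
    (hlam : ∀ i s, lam i s ∈ Λ) (a : ℕ → ℝ)
    (ha : ∀ i, a i = 1 - 1 / (l i : ℝ) +
      (1 / (l i : ℝ)) * ∑ s, (n i s : ℝ) * lam i s)
    (ha1 : ∀ i, a i ≤ 1)
    (hn1 : ∀ i, 1 ≤ n i ⟨0, hk i⟩)
    (hinf : {x : ℝ | ∃ i, x = lam i ⟨0, hk i⟩}.Infinite) :
    {x : ℝ | ∃ i, x = a i}.Infinite := by
  classical
  -- Λ is well-founded, hence partially well-ordered
  have hWF : Λ.IsWF := by
    rw [Set.isWF_iff_no_descending_seq]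
    intro f hf hmem
    exact hΛ ⟨f, fun m => hmem m, hf⟩
  have hPWO : Λ.IsPWO := hWF.isPWO
  have hM : Set.IsPWO (AddSubmonoid.closure Λ : Set ℝ) :=
    hPWO.addSubmonoid_closure h0
  have hN : Set.IsPWO (Set.univ : Set ℕ) :=
    (Set.isWF_univ_iff.2 (inferInstance : WellFoundedLT ℕ)).isPWO
  set σ : ℕ → ℝ := fun i => ∑ s, (n i s : ℝ) * lam i s with hσdef
  -- σ i - λ₁ i belongs to the additive monoid generated by Λ
  have hσmem : ∀ i, σ i - lam i ⟨0, hk i⟩ ∈ (AddSubmonoid.closure Λ : Set ℝ) := by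
    intro i
    have key : σ i - lam i ⟨0, hk i⟩ =
        (∑ s ∈ Finset.univ \ {(⟨0, hk i⟩ : Fin (k i))}, (n i s : ℝ) * lam i s)
          + ((n i ⟨0, hk i⟩ - 1 : ℕ) : ℝ) * lam i ⟨0, hk i⟩ := by
      have hsplit : σ i = (∑ s ∈ Finset.univ \ {(⟨0, hk i⟩ : Fin (k i))},
          (n i s : ℝ) * lam i s) + (n i ⟨0, hk i⟩ : ℝ) * lam i ⟨0, hk i⟩ :=
        Finset.sum_eq_sum_sdiff_singleton_add (Finset.mem_univ _) _
      have hcast : ((n i ⟨0, hk i⟩ - 1 : ℕ) : ℝ) = (n i ⟨0, hk i⟩ : ℝ) - 1 := by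
        have := hn1 i
        push_cast [Nat.cast_sub this]
        ring
      rw [hsplit, hcast]; ring
    rw [key]
    refine AddSubmonoid.add_mem _ (AddSubmonoid.sum_mem _ fun s _ => ?_) ?_
    · have := nsmul_mem (S := AddSubmonoid.closure Λ)
        (AddSubmonoid.subset_closure (hlam i s)) (n i s)
      rwa [nsmul_eq_mul] at this
    · have := nsmul_mem (S := AddSubmonoid.closure Λ)
        (AddSubmonoid.subset_closure (hlam i ⟨0, hk i⟩)) (n i ⟨0, hk i⟩ - 1)
      rwa [nsmul_eq_mul] at this
  -- suppose the set of a-values is finite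
  by_contra hfin
  rw [Set.not_infinite] at hfin
  -- choose indices realizing infinitely many distinct values of λ₁
  have e := hinf.natEmbedding
  have hsel : ∀ j : ℕ, ∃ i, (e j : ℝ) = lam i ⟨0, hk i⟩ := fun j => (e j).2
  choose idx hidx using hsel
  -- pigeonhole: some a-value α is attained on an infinite set of j's
  haveI : Finite {x : ℝ | ∃ i, x = a i} := hfin.to_subtype
  obtain ⟨⟨α, hα⟩, hfib⟩ := Finite.exists_infinite_fiber
    (fun j : ℕ => (⟨a (idx j), ⟨idx j, rfl⟩⟩ : {x : ℝ | ∃ i, x = a i}))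
  have g := (Set.infinite_coe_iff.mp hfib).natEmbedding
  have hag : ∀ j, a (idx (g j : ℕ)) = α := by
    intro j
    have h := (g j).2
    simp only [Set.mem_preimage, Set.mem_singleton_iff, Subtype.mk.injEq] at h
    exact h
  -- apply PWO to the sequence of triples
  set F : ℕ → ℝ × ℝ × ℕ := fun j =>
    (lam (idx (g j : ℕ)) ⟨0, hk _⟩,
      σ (idx (g j : ℕ)) - lam (idx (g j : ℕ)) ⟨0, hk _⟩, l (idx (g j : ℕ))) with hF
  obtain ⟨p, q, hpq, hle⟩ :=
    (hPWO.prod (hM.prod hN)).exists_lt (f := F) (fun j => ⟨hlam _ _, hσmem _, Set.mem_univ _⟩)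
  obtain ⟨h1, h2, h3⟩ : lam (idx (g p : ℕ)) ⟨0, hk _⟩ ≤ lam (idx (g q : ℕ)) ⟨0, hk _⟩ ∧
      σ (idx (g p : ℕ)) - lam (idx (g p : ℕ)) ⟨0, hk _⟩ ≤
        σ (idx (g q : ℕ)) - lam (idx (g q : ℕ)) ⟨0, hk _⟩ ∧
      l (idx (g p : ℕ)) ≤ l (idx (g q : ℕ)) := by
    exact ⟨hle.1, hle.2.1, hle.2.2⟩
  -- strictness of the first coordinate
  have hne : lam (idx (g p : ℕ)) ⟨0, hk _⟩ ≠ lam (idx (g q : ℕ)) ⟨0, hk _⟩ := by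
    rw [← hidx, ← hidx]
    intro hEq
    exact hpq.ne (g.injective (Subtype.ext (e.injective (Subtype.ext hEq))))
  have h1' : lam (idx (g p : ℕ)) ⟨0, hk _⟩ < lam (idx (g q : ℕ)) ⟨0, hk _⟩ :=
    lt_of_le_of_ne h1 hne
  have hσlt : σ (idx (g p : ℕ)) < σ (idx (g q : ℕ)) := by linarith
  -- express σ in terms of α and l, derive contradiction
  set m := idx (g p : ℕ)
  set m' := idx (g q : ℕ)
  have hlm : (0 : ℝ) < (l m : ℝ) := by exact_mod_cast (hl m)
  have hlm' : (0 : ℝ) < (l m' : ℝ) := by exact_mod_cast (hl m')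
  have hσm : σ m = (l m : ℝ) * (α - 1) + 1 := by
    have := ha m
    rw [hag p] at this
    field_simp at this
    nlinarith [this]
  have hσm' : σ m' = (l m' : ℝ) * (α - 1) + 1 := by
    have := ha m'
    rw [hag q] at this
    field_simp at this
    nlinarith [this]
  have hα1 : α ≤ 1 := by rw [← hag p]; exact ha1 m
  have hll : (l m : ℝ) ≤ (l m' : ℝ) := by exact_mod_cast h3
  nlinarith [hσlt, hσm, hσm', hα1, hll, hlm]
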